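/- Let q be a prime power, h ≥ 1, K ≥ 2, and let N be an integer with N ≥ ⌈ 2K / log_{q^h}( q^{2h} / (q^{h+1} − q + 1) ) ⌉, where log_{q^h} denotes the real logarithm in base q^h. Then there exist nonzero vectors v_1, …, v_N ∈ F_{q^h}^K whose F_{q^h}-span is all of F_{q^h}^K and such that ⟨v_1⟩_{F_{q^h}} ∪ … ∪ ⟨v_N⟩_{F_{q^h}} is an F_q-vectorial strong blocking set; equivalently, there exists a q-outer minimal [N,K]_{q^h} code. -/

import Mathlib

open Module Finset

open scoped Classical

section Aux

variable {Fq FL : Type} [Field Fq] [Field FL] [Algebra Fq FL]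

lemma sbs_nondeg (f : FL →ₗ[Fq] Fq) (hf : f ≠ 0) {z : FL} (h : ∀ l : FL, f (l * z) = 0) :
    z = 0 := by
  by_contra hz
  apply hf
  ext w
  have h1 := h (w * z⁻¹)
  rw [mul_assoc, inv_mul_cancel₀ hz, mul_one] at h1
  simpa using h1

lemma sbs_ratio (f : FL →ₗ[Fq] Fq) (hf : f ≠ 0) {x y : FL} (hx : x ≠ 0)
    (h : ∀ l : FL, f (l * x) = 0 → f (l * y) = 0) :
    ∃ c : Fq, y = c • x := by
  have hex : ∃ z : FL, f (z * x) ≠ 0 := by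
    by_contra hc
    push_neg at hc
    exact hx (sbs_nondeg f hf hc)
  obtain ⟨z, hz⟩ := hex
  set t : Fq := f (z * x) with ht
  refine ⟨t⁻¹ * f (z * y), ?_⟩
  have key : ∀ l : FL, f (l * y) = (t⁻¹ * f (z * y)) * f (l * x) := by
    intro l
    have h0 : f ((l - (t⁻¹ * f (l * x)) • z) * x) = 0 := by
      rw [sub_mul, map_sub, smul_mul_assoc, map_smul, smul_eq_mul, ← ht]
      field_simp
      simp
    have h1 := h _ h0
    rw [sub_mul, map_sub, smul_mul_assoc, map_smul, smul_eq_mul, sub_eq_zero] at h1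
    rw [h1]; ring
  have hz2 : ∀ l : FL, f (l * (y - (t⁻¹ * f (z * y)) • x)) = 0 := by
    intro l
    rw [mul_sub, map_sub, mul_smul_comm, map_smul, smul_eq_mul, key l, sub_eq_zero]
  have := sbs_nondeg f hf hz2
  rw [sub_eq_zero] at this
  exact this

end Aux

section Dot

variable {Fq FL : Type} [Field Fq] [Field FL] [Algebra Fq FL] {K : ℕ}

noncomputable def sbsDot (u : Fin K → FL) : (Fin K → FL) →ₗ[FL] FL :=
  ∑ i, u i • (LinearMap.proj i : (Fin K → FL) →ₗ[FL] FL)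

lemma sbsDot_apply (u w : Fin K → FL) : sbsDot u w = ∑ i, u i * w i := by
  simp [sbsDot, LinearMap.sum_apply, smul_eq_mul]

lemma sbsDot_single (u : Fin K → FL) (j : Fin K) : sbsDot u (Pi.single j 1) = u j := by
  rw [sbsDot_apply]
  rw [Finset.sum_eq_single j]
  · simp
  · intro i _ hij
    simp [Pi.single_apply, Ne.symm hij]
  · simp

lemma sbsDot_smul_left (c : Fq) (u w : Fin K → FL) :
    sbsDot (c • u) w = c • sbsDot u w := by
  simp only [sbsDot_apply, Pi.smul_apply, Finset.smul_sum, smul_mul_assoc]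

lemma sbsDot_add_left (u u' w : Fin K → FL) :
    sbsDot (u + u') w = sbsDot u w + sbsDot u' w := by
  simp only [sbsDot_apply, Pi.add_apply, add_mul, Finset.sum_add_distrib]

variable [Fintype FL]

lemma sbs_rep (f : FL →ₗ[Fq] Fq) (hf : f ≠ 0) (φ : (Fin K → FL) →ₗ[Fq] Fq) :
    ∃ u : Fin K → FL, ∀ w, φ w = f (sbsDot u w) := by
  let Φ : (Fin K → FL) →ₗ[Fq] Module.Dual Fq (Fin K → FL) :=
    { toFun := fun u => f.comp ((sbsDot u).restrictScalars Fq)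
      map_add' := by
        intro u u'
        ext w
        simp [sbsDot_add_left]
      map_smul' := by
        intro c u
        ext w
        simp [sbsDot_smul_left] }
  have hΦinj : Function.Injective Φ := by
    rw [injective_iff_map_eq_zero]
    intro u hu
    have hz : ∀ w : Fin K → FL, sbsDot u w = 0 := by
      intro w
      refine sbs_nondeg f hf fun l => ?_
      have := congrFun (congrArg (fun (g : Module.Dual Fq (Fin K → FL)) => (g : (Fin K → FL) → Fq)) hu) (l • w)
      simpa [Φ, map_smul, smul_eq_mul] using this
    funext j
    have := hz (Pi.single j 1)
    rw [sbsDot_single] at this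
    simpa using this
  have hrk : finrank Fq (Fin K → FL) = finrank Fq (Module.Dual Fq (Fin K → FL)) :=
    (Subspace.dual_finrank_eq).symm
  have hΦsurj := (LinearMap.injective_iff_surjective_of_finrank_eq_finrank hrk).mp hΦinj
  obtain ⟨u, hu⟩ := hΦsurj φ
  refine ⟨u, fun w => ?_⟩
  have := congrFun (congrArg (fun (g : Module.Dual Fq (Fin K → FL)) => (g : (Fin K → FL) → Fq)) hu) w
  simpa [Φ] using this.symm

end Dot
section Count

variable {FL : Type} [Field FL]

lemma sbs_fiber_count {V W : Type} [AddCommGroup V] [Module FL V] [AddCommGroup W] [Module FL W]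
    [Fintype V] [Fintype W] [Fintype FL] (G : V →ₗ[FL] W) (D : Finset W) (s : Finset V)
    (hs : ∀ w ∈ s, G w ∈ D) :
    s.card ≤ D.card * Fintype.card FL ^ (Module.finrank FL (LinearMap.ker G)) := by
  classical
  have hcard : Fintype.card (LinearMap.ker G) =
      Fintype.card FL ^ (Module.finrank FL (LinearMap.ker G)) := card_eq_pow_finrank
  have h1 : s.card ≤ Fintype.card (LinearMap.ker G) * (s.image G).card := by
    apply Finset.card_le_mul_card_image
    intro y hy
    obtain ⟨w₀, hw₀, hGw₀⟩ := Finset.mem_image.mp hy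
    have hss : (s.filter fun b => G b = y) ⊆
        (Finset.univ.image (fun z : LinearMap.ker G => w₀ + (z : V))) := by
      intro w hw
      obtain ⟨hws, hwy⟩ := Finset.mem_filter.mp hw
      refine Finset.mem_image.mpr ⟨⟨w - w₀, ?_⟩, Finset.mem_univ _, by simp⟩
      rw [LinearMap.mem_ker, map_sub, hwy, hGw₀, sub_self]
    calc (s.filter fun b => G b = y).card ≤ _ := Finset.card_le_card hss
      _ ≤ Fintype.card (LinearMap.ker G) := by
          apply le_trans (Finset.card_image_le)
          simp
  have h2 : s.image G ⊆ D := by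
    intro y hy
    obtain ⟨w, hw, hGw⟩ := Finset.mem_image.mp hy
    rw [← hGw]
    exact hs w hw
  calc s.card ≤ _ := h1
    _ ≤ Fintype.card (LinearMap.ker G) * D.card := by
        exact Nat.mul_le_mul_left _ (Finset.card_le_card h2)
    _ = _ := by rw [mul_comm, hcard]

end Count
section DCount

variable {Fq FL : Type} [Field Fq] [Field FL] [Algebra Fq FL] [Fintype Fq] [Fintype FL]

/-- The set of "bad directions" has at most `(|FL|-1)*|Fq| + 1` elements. -/
lemma sbs_D_count (f : FL →ₗ[Fq] Fq) (hf : f ≠ 0) :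
    (Finset.univ.filter (fun p : FL × FL => ∀ l : FL, f (l * p.1) = 0 → f (l * p.2) = 0)).card ≤
      (Fintype.card FL - 1) * Fintype.card Fq + 1 := by
  set D := Finset.univ.filter
    (fun p : FL × FL => ∀ l : FL, f (l * p.1) = 0 → f (l * p.2) = 0) with hD
  have hsub : D ⊆ insert ((0 : FL), (0 : FL))
      (((Finset.univ.erase (0 : FL)) ×ˢ (Finset.univ : Finset Fq)).image
        (fun pc : FL × Fq => (pc.1, pc.2 • pc.1))) := by
    intro p hp
    have hpD := (Finset.mem_filter.mp hp).2
    by_cases h1 : p.1 = 0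
    · have h2 : p.2 = 0 := by
        refine sbs_nondeg f hf fun l => hpD l ?_
        rw [h1, mul_zero, map_zero]
      rw [Finset.mem_insert]
      left
      exact Prod.ext h1 h2
    · obtain ⟨c, hc⟩ := sbs_ratio f hf h1 hpD
      rw [Finset.mem_insert]
      right
      refine Finset.mem_image.mpr ⟨(p.1, c), ?_, (Prod.ext rfl hc.symm)⟩
      rw [Finset.mem_product]
      exact ⟨Finset.mem_erase.mpr ⟨h1, Finset.mem_univ _⟩, Finset.mem_univ _⟩
  calc D.card ≤ _ := Finset.card_le_card hsub
    _ ≤ (((Finset.univ.erase (0 : FL)) ×ˢ (Finset.univ : Finset Fq)).image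
        (fun pc : FL × Fq => (pc.1, pc.2 • pc.1))).card + 1 := Finset.card_insert_le _ _
    _ ≤ (Fintype.card FL - 1) * Fintype.card Fq + 1 := by
        have := Finset.card_image_le (s := (Finset.univ.erase (0 : FL)) ×ˢ (Finset.univ : Finset Fq))
          (f := fun pc : FL × Fq => (pc.1, pc.2 • pc.1))
        rw [Finset.card_product, Finset.card_erase_of_mem (Finset.mem_univ _)] at this
        simpa using this

end DCount
section PairCount

variable {Fq FL : Type} [Field Fq] [Field FL] [Algebra Fq FL] [Fintype Fq] [Fintype FL]

lemma sbs_card_submodule {V : Type} [AddCommGroup V] [Module FL V] [Fintype V]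
    (S : Submodule FL V) : Fintype.card S = Fintype.card FL ^ (Module.finrank FL S) :=
  card_eq_pow_finrank

set_option maxHeartbeats 1000000 in
/-- Per-pair bad vector count. -/
lemma sbs_pair_count {K : ℕ} (hK : 2 ≤ K) (f : FL →ₗ[Fq] Fq) (hf : f ≠ 0)
    (u₁ u₂ : Fin K → FL) (hu₁ : u₁ ≠ 0) (hu₂ : ∀ c : Fq, u₂ ≠ c • u₁) :
    (Finset.univ.filter (fun w : Fin K → FL =>
        ∀ l : FL, f (l * sbsDot u₁ w) = 0 → f (l * sbsDot u₂ w) = 0)).card ≤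
      ((Fintype.card FL - 1) * Fintype.card Fq + 1) * Fintype.card FL ^ (K - 2) := by
  classical
  set G : (Fin K → FL) →ₗ[FL] FL × FL := LinearMap.prod (sbsDot u₁) (sbsDot u₂) with hG
  set D : Finset (FL × FL) := Finset.univ.filter
    (fun p : FL × FL => ∀ l : FL, f (l * p.1) = 0 → f (l * p.2) = 0) with hD
  have hGfst : ∀ w, (G w).1 = sbsDot u₁ w := fun w => rfl
  have hGsnd : ∀ w, (G w).2 = sbsDot u₂ w := fun w => rfl
  have hFL1 : 1 ≤ Fintype.card FL := Fintype.card_pos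
  have hDb : Fintype.card FL ≤ (Fintype.card FL - 1) * Fintype.card Fq + 1 := by
    have hq1 : 1 ≤ Fintype.card Fq := Fintype.card_pos
    calc Fintype.card FL = (Fintype.card FL - 1) * 1 + 1 := by omega
      _ ≤ _ := by
          apply Nat.add_le_add_right
          exact Nat.mul_le_mul_left _ hq1
  have hrkV : Module.finrank FL (Fin K → FL) = K := by
    rw [Module.finrank_fintype_fun_eq_card, Fintype.card_fin]
  have hrn := LinearMap.finrank_range_add_finrank_ker G
  rw [hrkV] at hrn
  have hkercard : Fintype.card (LinearMap.ker G) =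
      Fintype.card FL ^ (Module.finrank FL (LinearMap.ker G)) := sbs_card_submodule _
  have hrange1 : LinearMap.range G ≠ ⊥ := by
    intro hbot
    apply hu₁
    funext j
    have h0 : G (Pi.single j 1) = 0 := by
      rw [← Submodule.mem_bot (R := FL), ← hbot]
      exact LinearMap.mem_range_self _ _
    have h1 := congrArg Prod.fst h0
    rw [hGfst, sbsDot_single] at h1
    simpa using h1
  have hrpos : 1 ≤ Module.finrank FL (LinearMap.range G) := by
    rcases Nat.eq_zero_or_pos (Module.finrank FL (LinearMap.range G)) with h | h
    · exact absurd (Submodule.finrank_eq_zero.mp h) hrange1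
    · exact h
  by_cases hr : Module.finrank FL (LinearMap.range G) ≤ 1
  -- degenerate case: range has rank 1
  · have hsub : (Finset.univ.filter (fun w : Fin K → FL =>
        ∀ l : FL, f (l * sbsDot u₁ w) = 0 → f (l * sbsDot u₂ w) = 0)) ⊆
        Finset.univ.filter (fun w => w ∈ LinearMap.ker G) := by
      intro w hw
      have hwbad := (Finset.mem_filter.mp hw).2
      refine Finset.mem_filter.mpr ⟨Finset.mem_univ _, ?_⟩
      rw [LinearMap.mem_ker]
      by_contra hGw
      have hx : (G w).1 ≠ 0 := by
        intro h1
        apply hGw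
        have h2 : (G w).2 = 0 := by
          refine sbs_nondeg f hf fun l => ?_
          rw [hGsnd]
          refine hwbad l ?_
          rw [← hGfst, h1, mul_zero, map_zero]
        exact Prod.ext h1 h2
      have hcond : ∀ l : FL, f (l * (G w).1) = 0 → f (l * (G w).2) = 0 := by
        intro l hl
        rw [hGsnd]
        refine hwbad l ?_
        rw [← hGfst]
        exact hl
      obtain ⟨c, hc⟩ := sbs_ratio f hf hx hcond
      -- range G = span {G w}
      have hspan : Submodule.span FL {G w} = LinearMap.range G := by
        apply Submodule.eq_of_le_of_finrank_le
        · rw [Submodule.span_singleton_le_iff_mem]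
          exact LinearMap.mem_range_self _ _
        · rw [finrank_span_singleton hGw]
          exact hr
      apply hu₂ c
      funext j
      have hmem : G (Pi.single j 1) ∈ Submodule.span FL {G w} := by
        rw [hspan]; exact LinearMap.mem_range_self _ _
      obtain ⟨μ, hμ⟩ := Submodule.mem_span_singleton.mp hmem
      have h1 := congrArg Prod.fst hμ
      have h2 := congrArg Prod.snd hμ
      rw [Prod.smul_fst, hGfst, hGfst, sbsDot_single] at h1
      rw [Prod.smul_snd, hGsnd, hGsnd, sbsDot_single] at h2
      rw [← h2, ← hGsnd, hc, hGfst, Pi.smul_apply, ← h1]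
      exact smul_comm μ c _
    calc _ ≤ (Finset.univ.filter (fun w => w ∈ LinearMap.ker G)).card :=
          Finset.card_le_card hsub
      _ = Fintype.card (LinearMap.ker G) := (Fintype.card_subtype _).symm
      _ ≤ Fintype.card FL ^ (K - 1) := by
          rw [hkercard]
          apply Nat.pow_le_pow_right hFL1
          omega
      _ ≤ _ := by
          have : Fintype.card FL ^ (K - 1) = Fintype.card FL * Fintype.card FL ^ (K - 2) := by
            rw [← pow_succ']
            congr 1
            omega
          rw [this]
          exact Nat.mul_le_mul_right _ hDb
  -- main case: range has rank 2
  · push_neg at hr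
    have hrk2 : Module.finrank FL (FL × FL) = 2 := by
      rw [Module.finrank_prod, finrank_self]
    have hrle : Module.finrank FL (LinearMap.range G) ≤ 2 := hrk2 ▸ Submodule.finrank_le _
    have hrange : Module.finrank FL (LinearMap.range G) = 2 := by omega
    have hker2 : Module.finrank FL (LinearMap.ker G) = K - 2 := by omega
    calc _ ≤ D.card * Fintype.card FL ^ (Module.finrank FL (LinearMap.ker G)) := by
          apply sbs_fiber_count G D
          intro w hw
          have hwbad := (Finset.mem_filter.mp hw).2
          rw [hD]
          exact Finset.mem_filter.mpr ⟨Finset.mem_univ _, hwbad⟩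
      _ ≤ ((Fintype.card FL - 1) * Fintype.card Fq + 1) * Fintype.card FL ^ (K - 2) := by
          rw [hker2]
          apply Nat.mul_le_mul_right
          rw [hD]
          exact sbs_D_count f hf

end PairCount
section Geom

variable {Fq V : Type} [Field Fq] [AddCommGroup V] [Module Fq V] [FiniteDimensional Fq V]

/-- Intermediate subspaces of every dimension exist. -/
lemma sbs_exists_inter (d : ℕ) :
    ∀ W H : Submodule Fq V, W ≤ H → Module.finrank Fq W + d ≤ Module.finrank Fq H →
      ∃ W' : Submodule Fq V, W ≤ W' ∧ W' ≤ H ∧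
        Module.finrank Fq W' = Module.finrank Fq W + d := by
  induction d with
  | zero => exact fun W H hWH _ => ⟨W, le_refl _, hWH, rfl⟩
  | succ d ih =>
    intro W H hWH hd
    have hne : ¬ H ≤ W := by
      intro hle
      have := Submodule.finrank_mono hle
      omega
    obtain ⟨x, hxH, hxW⟩ := SetLike.not_le_iff_exists.mp hne
    have hx0 : x ≠ 0 := fun h => hxW (h ▸ W.zero_mem)
    have hWle : W ≤ W ⊔ (Fq ∙ x) := le_sup_left
    have hW₂H : W ⊔ (Fq ∙ x) ≤ H := sup_le hWH ((Submodule.span_singleton_le_iff_mem x H).mpr hxH)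
    have hinf : W ⊓ (Fq ∙ x) = ⊥ := by
      rw [eq_bot_iff]
      rintro y ⟨hyW, hyx⟩
      obtain ⟨c, rfl⟩ := Submodule.mem_span_singleton.mp hyx
      rcases eq_or_ne c 0 with rfl | hc
      · simp
      · refine absurd ?_ hxW
        have := W.smul_mem c⁻¹ hyW
        rwa [smul_smul, inv_mul_cancel₀ hc, one_smul] at this
    have hfr : Module.finrank Fq ↥(W ⊔ (Fq ∙ x)) = Module.finrank Fq W + 1 := by
      have h1 := Submodule.finrank_sup_add_finrank_inf_eq W (Fq ∙ x)
      rw [hinf, finrank_bot, finrank_span_singleton hx0] at h1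
      omega
    obtain ⟨W', h1, h2, h3⟩ := ih (W ⊔ (Fq ∙ x)) H hW₂H (by omega)
    exact ⟨W', hWle.trans h1, h2, by omega⟩

lemma sbs_exists_phi (H : Submodule Fq V)
    (hH : Module.finrank Fq H + 1 = Module.finrank Fq V) :
    ∃ φ : V →ₗ[Fq] Fq, LinearMap.ker φ = H := by
  have hq1 : Module.finrank Fq (V ⧸ H) = 1 := by
    have := Submodule.finrank_quotient_add_finrank H
    omega
  have e : (V ⧸ H) ≃ₗ[Fq] Fq := LinearEquiv.ofFinrankEq _ _ (by rw [hq1, finrank_self])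
  refine ⟨e.toLinearMap.comp H.mkQ, ?_⟩
  ext x
  rw [LinearMap.mem_ker, LinearMap.comp_apply]
  constructor
  · intro hx
    have : H.mkQ x = 0 := by
      apply e.injective
      simpa using hx
    rwa [← Submodule.Quotient.mk_eq_zero, ← Submodule.mkQ_apply]
  · intro hx
    have : H.mkQ x = 0 := by
      rw [Submodule.mkQ_apply, Submodule.Quotient.mk_eq_zero]
      exact hx
    rw [this, map_zero]

lemma sbs_exists_psi (H' H : Submodule Fq V) (hle : H' ≤ H)
    (hfr : Module.finrank Fq H' + 1 = Module.finrank Fq H) :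
    ∃ ψ : V →ₗ[Fq] Fq, H ⊓ LinearMap.ker ψ = H' := by
  have hne : ¬ H ≤ H' := by
    intro h
    have := Submodule.finrank_mono h
    omega
  obtain ⟨x, hxH, hxH'⟩ := SetLike.not_le_iff_exists.mp hne
  set π := H'.mkQ with hπ
  have hx0 : π x ≠ 0 := by
    rw [hπ, Submodule.mkQ_apply, ne_eq, Submodule.Quotient.mk_eq_zero]
    exact hxH'
  have hψ' : ∃ ψ' : Module.Dual Fq (V ⧸ H'), ψ' (π x) ≠ 0 := by
    by_contra hc
    push_neg at hc
    exact hx0 ((Module.forall_dual_apply_eq_zero_iff Fq _).mp hc)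
  obtain ⟨ψ', hψ'0⟩ := hψ'
  -- the image of H in the quotient is spanned by π x
  have hmap : Submodule.map π H = Submodule.span Fq {π x} := by
    symm
    apply Submodule.eq_of_le_of_finrank_le
    · rw [Submodule.span_singleton_le_iff_mem]
      exact Submodule.mem_map_of_mem hxH
    · have hrn := LinearMap.finrank_range_add_finrank_ker (π.comp H.subtype)
      have hker : LinearMap.ker (π.comp H.subtype) = Submodule.comap H.subtype H' := by
        rw [LinearMap.ker_comp, hπ, Submodule.ker_mkQ]
      have hkerrank : Module.finrank Fq (LinearMap.ker (π.comp H.subtype)) =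
          Module.finrank Fq H' := by
        rw [hker]
        exact LinearEquiv.finrank_eq (Submodule.comapSubtypeEquivOfLe hle)
      have hrange : LinearMap.range (π.comp H.subtype) = Submodule.map π H := by
        rw [LinearMap.range_comp, Submodule.range_subtype]
      rw [hrange, hkerrank] at hrn
      rw [finrank_span_singleton hx0]
      omega
  refine ⟨ψ'.comp π, ?_⟩
  apply le_antisymm
  · rintro y ⟨hyH, hyk⟩
    rw [SetLike.mem_coe, LinearMap.mem_ker, LinearMap.comp_apply] at hyk
    have hy : π y ∈ Submodule.map π H := Submodule.mem_map_of_mem hyH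
    rw [hmap] at hy
    obtain ⟨a, ha⟩ := Submodule.mem_span_singleton.mp hy
    have ha0 : a = 0 := by
      by_contra hc
      apply hψ'0
      have : ψ' (a • π x) = 0 := by rw [ha]; exact hyk
      rw [map_smul, smul_eq_mul] at this
      exact (mul_eq_zero.mp this).resolve_left hc
    have : π y = 0 := by rw [← ha, ha0, zero_smul]
    rwa [hπ, Submodule.mkQ_apply, Submodule.Quotient.mk_eq_zero] at this
  · intro y hy
    refine ⟨hle hy, ?_⟩
    rw [SetLike.mem_coe, LinearMap.mem_ker, LinearMap.comp_apply]
    have : π y = 0 := by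
      rw [hπ, Submodule.mkQ_apply, Submodule.Quotient.mk_eq_zero]
      exact hy
    rw [this, map_zero]

end Geom
section Numeric

lemma sbs_numeric (q h K N : ℕ) (hq2 : 2 ≤ q) (hh : 1 ≤ h) (hK : 2 ≤ K)
    (hN : ⌈(2 * K : ℝ) /
        Real.logb ((q : ℝ) ^ h) ((q : ℝ) ^ (2 * h) / ((q : ℝ) ^ (h + 1) - q + 1))⌉ ≤ (N : ℤ)) :
    ((q ^ h - 1) * q + 1) ^ N * q ^ (2 * h * K) ≤ q ^ (2 * h * N) := by
  have hq1R : (1 : ℝ) < (q : ℝ) := by exact_mod_cast hq2.trans_lt' one_lt_two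
  have hq0R : (0 : ℝ) < (q : ℝ) := lt_trans one_pos hq1R
  set a : ℝ := (q : ℝ) ^ h with ha
  have ha1 : 1 < a := one_lt_pow₀ hq1R (by omega)
  set s : ℝ := (q : ℝ) ^ (h + 1) - q + 1 with hs
  have hqle : (q : ℝ) ≤ (q : ℝ) ^ (h + 1) := by
    calc (q : ℝ) = (q : ℝ) ^ 1 := (pow_one _).symm
      _ ≤ _ := pow_le_pow_right₀ (le_of_lt hq1R) (by omega)
  have hs1 : 1 ≤ s := by rw [hs]; linarith
  have hs0 : 0 < s := lt_of_lt_of_le one_pos hs1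
  have hslt : s < (q : ℝ) ^ (2 * h) := by
    have h1 : (q : ℝ) ^ (h + 1) ≤ (q : ℝ) ^ (2 * h) := pow_le_pow_right₀ (le_of_lt hq1R) (by omega)
    rw [hs]
    have : (2 : ℝ) ≤ (q : ℝ) := by exact_mod_cast hq2
    linarith
  set R : ℝ := (q : ℝ) ^ (2 * h) / s with hR
  have hR1 : 1 < R := (one_lt_div hs0).mpr hslt
  have hl : 0 < Real.logb a R := Real.logb_pos ha1 hR1
  have hceil : (2 * K : ℝ) / Real.logb a R ≤ (N : ℝ) := by
    have := Int.ceil_le.mp hN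
    exact_mod_cast this
  have hKN : (2 * K : ℝ) ≤ (N : ℝ) * Real.logb a R := by
    rw [div_le_iff₀ hl] at hceil
    exact hceil
  have hloga : 0 < Real.log a := Real.log_pos ha1
  have hlogR : Real.logb a R = Real.log R / Real.log a := rfl
  have hkey : (2 * K : ℝ) * Real.log a ≤ (N : ℝ) * Real.log R := by
    rw [hlogR] at hKN
    calc (2 * K : ℝ) * Real.log a ≤ ((N : ℝ) * (Real.log R / Real.log a)) * Real.log a := by
          apply mul_le_mul_of_nonneg_right hKN (le_of_lt hloga)
      _ = (N : ℝ) * Real.log R := by field_simp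
  have hpow : a ^ (2 * K) ≤ R ^ N := by
    have hA : (0 : ℝ) < a ^ (2 * K) := pow_pos (lt_trans one_pos ha1) _
    have hB : (0 : ℝ) < R ^ N := pow_pos (lt_trans one_pos hR1) _
    rw [← Real.log_le_log_iff hA hB, Real.log_pow (n := 2 * K) (x := a), Real.log_pow (n := N) (x := R)]
    exact_mod_cast hkey
  -- translate to the natural number inequality
  have hcast : ((((q ^ h - 1) * q + 1 : ℕ)) : ℝ) = s := by
    have h1 : (1 : ℕ) ≤ q ^ h := Nat.one_le_pow _ _ (by omega)
    push_cast [Nat.cast_sub h1]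
    rw [hs, pow_succ]
    ring
  have hfinal : (((q ^ h - 1) * q + 1 : ℕ) : ℝ) ^ N * (q : ℝ) ^ (2 * h * K) ≤
      (q : ℝ) ^ (2 * h * N) := by
    rw [hcast]
    have h1 : a ^ (2 * K) = (q : ℝ) ^ (2 * h * K) := by
      rw [ha, ← pow_mul, mul_comm h (2 * K), mul_assoc, mul_comm K h, ← mul_assoc]
    have h2 : R ^ N = (q : ℝ) ^ (2 * h * N) / s ^ N := by
      rw [hR, div_pow, ← pow_mul, mul_assoc]
    have h3 := hpow
    rw [h1, h2] at h3
    have hsN : (0 : ℝ) < s ^ N := pow_pos hs0 _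
    rw [le_div_iff₀ hsN] at h3
    calc s ^ N * (q : ℝ) ^ (2 * h * K) = (q : ℝ) ^ (2 * h * K) * s ^ N := by ring
      _ ≤ _ := h3
  exact_mod_cast hfinal

end Numeric
set_option maxHeartbeats 1000000 in
/-- Existence of outer minimal `[N,K]_{q^h}` codes (equivalently, outer strong blocking sets of
size `N` in `PG(K-1,q^h)`) whenever `N ≥ ⌈2K / log_{q^h}(q^{2h}/(q^{h+1}-q+1))⌉`. -/
theorem stmt_10 (q h K N : ℕ) (hq : IsPrimePow q) (hh : 1 ≤ h) (hK : 2 ≤ K)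
    (Fq FL : Type) [Field Fq] [Field FL] [Algebra Fq FL] [Fintype Fq] [Fintype FL]
    (hcard_q : Fintype.card Fq = q) (hcard_L : Fintype.card FL = q ^ h)
    (hN : ⌈(2 * K : ℝ) /
        Real.logb ((q : ℝ) ^ h) ((q : ℝ) ^ (2 * h) / ((q : ℝ) ^ (h + 1) - q + 1))⌉ ≤ (N : ℤ)) :
    ∃ v : Fin N → (Fin K → FL), (∀ i, v i ≠ 0) ∧
      Submodule.span FL (Set.range v) = ⊤ ∧
      (∀ H : Submodule Fq (Fin K → FL), Module.finrank Fq H = K * h - 1 →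
        Submodule.span Fq ((⋃ i, (Submodule.span FL {v i} : Set (Fin K → FL)))
          ∩ (H : Set (Fin K → FL))) = H) := by
  classical
  have hq2 : 2 ≤ q := hq.two_le
  have hKh2 : 2 ≤ K * h := le_trans (by omega) (Nat.mul_le_mul hK hh)
  have hdimL : Module.finrank Fq FL = h := by
    have hc := card_eq_pow_finrank (K := Fq) (V := FL)
    rw [hcard_q, hcard_L] at hc
    exact (Nat.pow_right_injective hq2 hc.symm)
  have hrkFLV : Module.finrank FL (Fin K → FL) = K := by
    rw [Module.finrank_fintype_fun_eq_card, Fintype.card_fin]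
  have hdimV : Module.finrank Fq (Fin K → FL) = K * h := by
    have hmul := Module.finrank_mul_finrank Fq FL (Fin K → FL)
    rw [hdimL, hrkFLV] at hmul
    rw [← hmul]
    exact Nat.mul_comm h K
  -- a nonzero `Fq`-linear functional on `FL`
  obtain ⟨f, hf⟩ : ∃ f : FL →ₗ[Fq] Fq, f ≠ 0 := by
    by_contra hc
    push_neg at hc
    have h1 : (1 : FL) = 0 := by
      apply (Module.forall_dual_apply_eq_zero_iff Fq (1 : FL)).mp
      intro φ
      rw [hc φ]
      rfl
    exact one_ne_zero h1
  have hnum := sbs_numeric q h K N hq2 hh hK hN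
  have hcardV : Fintype.card (Fin K → FL) = q ^ (h * K) := by
    rw [Fintype.card_fun, Fintype.card_fin, hcard_L, ← pow_mul]
  have hcardT : Fintype.card (Fin N → (Fin K → FL)) = q ^ (h * K * N) := by
    rw [Fintype.card_fun, Fintype.card_fin, hcardV, ← pow_mul]
  -- the bad events
  set P : Finset ((Fin K → FL) × (Fin K → FL)) :=
    Finset.univ.filter (fun u => u.1 ≠ 0 ∧ ∀ c : Fq, u.2 ≠ c • u.1) with hP
  set Bad : Finset (Fin N → (Fin K → FL)) :=
    P.biUnion (fun u => Finset.univ.filter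
      (fun v : Fin N → (Fin K → FL) => ∀ i, ∀ l : FL,
        f (l * sbsDot u.1 (v i)) = 0 → f (l * sbsDot u.2 (v i)) = 0)) with hBad
  set B : ℕ := ((q ^ h - 1) * q + 1) * (q ^ h) ^ (K - 2) with hBdef
  have hBw : ∀ u ∈ P, (Finset.univ.filter
      (fun v : Fin N → (Fin K → FL) => ∀ i, ∀ l : FL,
        f (l * sbsDot u.1 (v i)) = 0 → f (l * sbsDot u.2 (v i)) = 0)).card ≤ B ^ N := by
    intro u hu
    obtain ⟨-, hu1, hu2⟩ := Finset.mem_filter.mp hu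
    have hpiEq : (Finset.univ.filter
        (fun v : Fin N → (Fin K → FL) => ∀ i, ∀ l : FL,
          f (l * sbsDot u.1 (v i)) = 0 → f (l * sbsDot u.2 (v i)) = 0)) =
        Fintype.piFinset (fun _ : Fin N => Finset.univ.filter
          (fun w : Fin K → FL => ∀ l : FL,
            f (l * sbsDot u.1 w) = 0 → f (l * sbsDot u.2 w) = 0)) := by
      ext v
      simp only [Finset.mem_filter, Finset.mem_univ, true_and, Fintype.mem_piFinset]
    rw [hpiEq, Fintype.card_piFinset]
    have hone : ∀ i : Fin N, (Finset.univ.filter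
        (fun w : Fin K → FL => ∀ l : FL,
          f (l * sbsDot u.1 w) = 0 → f (l * sbsDot u.2 w) = 0)).card ≤ B := by
      intro i
      have := sbs_pair_count hK f hf u.1 u.2 hu1 hu2
      rwa [hcard_q, hcard_L] at this
    calc ∏ _i : Fin N, (Finset.univ.filter
        (fun w : Fin K → FL => ∀ l : FL,
          f (l * sbsDot u.1 w) = 0 → f (l * sbsDot u.2 w) = 0)).card
        ≤ ∏ _i : Fin N, B := Finset.prod_le_prod (fun _ _ => Nat.zero_le _)
          (fun i _ => hone i)
      _ = B ^ N := by rw [Finset.prod_const, Finset.card_univ, Fintype.card_fin]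
  have hPcard : P.card ≤ (q ^ (h * K) - 1) * q ^ (h * K) := by
    have hsub : P ⊆ (Finset.univ.erase (0 : Fin K → FL)) ×ˢ Finset.univ := by
      intro u hu
      obtain ⟨-, hu1, -⟩ := Finset.mem_filter.mp hu
      rw [Finset.mem_product]
      exact ⟨Finset.mem_erase.mpr ⟨hu1, Finset.mem_univ _⟩, Finset.mem_univ _⟩
    calc P.card ≤ _ := Finset.card_le_card hsub
      _ = (q ^ (h * K) - 1) * q ^ (h * K) := by
          rw [Finset.card_product, Finset.card_erase_of_mem (Finset.mem_univ _),
            Finset.card_univ, hcardV]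
  have hBadcard : Bad.card < Fintype.card (Fin N → (Fin K → FL)) := by
    have h1 : Bad.card ≤ (q ^ (h * K) - 1) * q ^ (h * K) * B ^ N := by
      calc Bad.card ≤ ∑ u ∈ P, (Finset.univ.filter
          (fun v : Fin N → (Fin K → FL) => ∀ i, ∀ l : FL,
            f (l * sbsDot u.1 (v i)) = 0 → f (l * sbsDot u.2 (v i)) = 0)).card :=
            Finset.card_biUnion_le
        _ ≤ ∑ _u ∈ P, B ^ N := Finset.sum_le_sum hBw
        _ = P.card * B ^ N := by rw [Finset.sum_const, smul_eq_mul]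
        _ ≤ _ := Nat.mul_le_mul_right _ hPcard
    -- numeric bookkeeping
    have hBN : B ^ N = ((q ^ h - 1) * q + 1) ^ N * q ^ (h * (K - 2) * N) := by
      rw [hBdef, mul_pow, ← pow_mul, ← pow_mul, ← mul_assoc]
    have hexp : h * (K - 2) * N + 2 * h * N = h * K * N := by
      have h2 : (K - 2) + 2 = K := Nat.sub_add_cancel hK
      calc h * (K - 2) * N + 2 * h * N = h * ((K - 2) + 2) * N := by ring
        _ = h * K * N := by rw [h2]
    have hkey : q ^ (h * K) * q ^ (h * K) * B ^ N ≤ q ^ (h * K * N) := by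
      rw [hBN]
      calc q ^ (h * K) * q ^ (h * K) * (((q ^ h - 1) * q + 1) ^ N * q ^ (h * (K - 2) * N))
          = (((q ^ h - 1) * q + 1) ^ N * q ^ (2 * h * K)) * q ^ (h * (K - 2) * N) := by
            rw [← pow_add]
            ring_nf
        _ ≤ q ^ (2 * h * N) * q ^ (h * (K - 2) * N) := Nat.mul_le_mul_right _ hnum
        _ = q ^ (h * K * N) := by rw [← pow_add, ← hexp]; ring_nf
    have hB1 : 1 ≤ B := by
      rw [hBdef]
      exact Nat.one_le_iff_ne_zero.mpr (Nat.mul_ne_zero (by omega)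
        (pow_ne_zero _ (by positivity)))
    have hX1 : 1 ≤ q ^ (h * K) * B ^ N := by
      have ha : 1 ≤ q ^ (h * K) := Nat.one_le_pow _ _ (by omega)
      have hb : 1 ≤ B ^ N := Nat.one_le_pow _ _ (by omega)
      calc 1 = 1 * 1 := rfl
        _ ≤ _ := Nat.mul_le_mul ha hb
    have hrewrite : (q ^ (h * K) - 1) * q ^ (h * K) * B ^ N =
        (q ^ (h * K) - 1) * (q ^ (h * K) * B ^ N) := by ring
    rw [hrewrite] at h1
    have hfinal : (q ^ (h * K) - 1) * (q ^ (h * K) * B ^ N) < q ^ (h * K * N) := by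
      have hAX : q ^ (h * K) * (q ^ (h * K) * B ^ N) ≤ q ^ (h * K * N) := by
        rw [← mul_assoc]
        exact hkey
      have hexpand : (q ^ (h * K) - 1) * (q ^ (h * K) * B ^ N) =
          q ^ (h * K) * (q ^ (h * K) * B ^ N) - (q ^ (h * K) * B ^ N) := by
        rw [Nat.sub_mul, one_mul]
      have hM1 : 1 ≤ q ^ (h * K) * (q ^ (h * K) * B ^ N) := by
        have ha : 1 ≤ q ^ (h * K) := Nat.one_le_pow _ _ (by omega)
        calc 1 = 1 * 1 := rfl
          _ ≤ _ := Nat.mul_le_mul ha hX1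
      omega
    rw [hcardT]
    exact lt_of_le_of_lt h1 hfinal
  -- a good tuple exists
  obtain ⟨v, hv⟩ : ∃ v : Fin N → (Fin K → FL), v ∉ Bad := by
    by_contra hc
    push_neg at hc
    have : Finset.univ ⊆ Bad := fun v _ => hc v
    have := Finset.card_le_card this
    rw [Finset.card_univ] at this
    omega
  have hgood : ∀ u₁ u₂ : Fin K → FL, u₁ ≠ 0 → (∀ c : Fq, u₂ ≠ c • u₁) →
      ∃ i, ∃ l : FL, f (l * sbsDot u₁ (v i)) = 0 ∧ f (l * sbsDot u₂ (v i)) ≠ 0 := by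
    intro u₁ u₂ hu₁ hu₂
    by_contra hc
    push_neg at hc
    apply hv
    rw [hBad]
    apply Finset.mem_biUnion.mpr
    refine ⟨(u₁, u₂), ?_, ?_⟩
    · rw [hP]
      exact Finset.mem_filter.mpr ⟨Finset.mem_univ _, hu₁, hu₂⟩
    · exact Finset.mem_filter.mpr ⟨Finset.mem_univ _, fun i l hl => hc i l hl⟩
  -- the key property of `v`
  have C1 : ∀ H : Submodule Fq (Fin K → FL), Module.finrank Fq H = K * h - 1 →
      Submodule.span Fq ((⋃ i, (Submodule.span FL {v i} : Set (Fin K → FL)))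
        ∩ (H : Set (Fin K → FL))) = H := by
    intro H hH
    have hHr : Module.finrank Fq H + 1 = K * h := by omega
    by_contra hne
    set W : Submodule Fq (Fin K → FL) :=
      Submodule.span Fq ((⋃ i, (Submodule.span FL {v i} : Set (Fin K → FL)))
        ∩ (H : Set (Fin K → FL))) with hW
    have hWH : W ≤ H := Submodule.span_le.mpr Set.inter_subset_right
    have hlt : W < H := lt_of_le_of_ne hWH hne
    have hWfr : Module.finrank Fq W < Module.finrank Fq H :=
      Submodule.finrank_lt_finrank_of_lt hlt
    obtain ⟨H', hWH', hH'H, hH'fr⟩ := sbs_exists_inter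
      ((Module.finrank Fq H - 1) - Module.finrank Fq W) W H hWH (by omega)
    have hH'fr' : Module.finrank Fq H' + 1 = Module.finrank Fq H := by omega
    obtain ⟨φ, hφ⟩ := sbs_exists_phi H (by rw [hdimV]; exact hHr)
    obtain ⟨ψ, hψ⟩ := sbs_exists_psi H' H hH'H hH'fr'
    obtain ⟨u₁, hu₁⟩ := sbs_rep f hf φ
    obtain ⟨u₂, hu₂⟩ := sbs_rep f hf ψ
    have hu₁0 : u₁ ≠ 0 := by
      rintro rfl
      have hφ0 : φ = 0 := by
        refine LinearMap.ext fun w => ?_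
        rw [hu₁ w]
        simp [sbsDot_apply]
      rw [hφ0, LinearMap.ker_zero] at hφ
      have : Module.finrank Fq H = K * h := by
        rw [← hφ, finrank_top, hdimV]
      omega
    have hu₂c : ∀ c : Fq, u₂ ≠ c • u₁ := by
      intro c hc
      have hψφ : ∀ w, ψ w = c • φ w := by
        intro w
        rw [hu₂, hu₁, hc, sbsDot_smul_left, map_smul]
      have hker : H ≤ LinearMap.ker ψ := by
        intro x hx
        rw [LinearMap.mem_ker, hψφ]
        have hx0 : φ x = 0 := by
          rw [← LinearMap.mem_ker, hφ]
          exact hx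
        rw [hx0, smul_zero]
      have heq : H ⊓ LinearMap.ker ψ = H := inf_eq_left.mpr hker
      rw [hψ] at heq
      have hfr2 := congrArg (fun S : Submodule Fq (Fin K → FL) => Module.finrank Fq S) heq
      change Module.finrank Fq H' = Module.finrank Fq H at hfr2
      omega
    obtain ⟨i, l, hl0, hlne⟩ := hgood u₁ u₂ hu₁0 hu₂c
    have hzH : l • v i ∈ H := by
      rw [← hφ, LinearMap.mem_ker, hu₁, map_smul, smul_eq_mul]
      exact hl0
    have hzS : l • v i ∈ (⋃ i, (Submodule.span FL {v i} : Set (Fin K → FL))) :=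
      Set.mem_iUnion.mpr ⟨i, Submodule.smul_mem _ l (Submodule.mem_span_singleton_self _)⟩
    have hzW : l • v i ∈ W := Submodule.subset_span ⟨hzS, hzH⟩
    have hzH' : l • v i ∈ H' := hWH' hzW
    have hzker : ψ (l • v i) = 0 := by
      have hmem : l • v i ∈ H ⊓ LinearMap.ker ψ := by rw [hψ]; exact hzH'
      exact (LinearMap.mem_ker).mp hmem.2
    apply hlne
    rw [hu₂, map_smul, smul_eq_mul] at hzker
    exact hzker
  -- some coordinate of `v` is nonzero
  obtain ⟨j, hj⟩ : ∃ j, v j ≠ 0 := by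
    by_contra hc
    push_neg at hc
    obtain ⟨H, -, -, hHfr⟩ := sbs_exists_inter (K * h - 1)
      (⊥ : Submodule Fq (Fin K → FL)) ⊤ bot_le
      (by rw [finrank_bot, finrank_top, hdimV]; omega)
    rw [finrank_bot] at hHfr
    have hHfr' : Module.finrank Fq H = K * h - 1 := by omega
    have hCH := C1 H hHfr'
    have hS0 : (⋃ i, (Submodule.span FL {v i} : Set (Fin K → FL))) ⊆ {0} := by
      intro x hx
      obtain ⟨i, hxi⟩ := Set.mem_iUnion.mp hx
      rw [hc i, Submodule.span_zero_singleton] at hxi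
      simpa using hxi
    have hHbot : H ≤ ⊥ := by
      rw [← hCH]
      apply Submodule.span_le.mpr
      rintro x ⟨hx1, -⟩
      have : x = 0 := hS0 hx1
      simp [this]
    have : H = ⊥ := le_bot_iff.mp hHbot
    rw [this, finrank_bot] at hHfr'
    omega
  -- fix up the zero coordinates
  set v' : Fin N → (Fin K → FL) := fun i => if v i = 0 then v j else v i with hv'
  have hv'ne : ∀ i, v' i ≠ 0 := by
    intro i
    rw [hv']
    by_cases hvi : v i = 0
    · simpa [hvi] using hj
    · simpa [hvi] using hvi
  have hSeq : (⋃ i, (Submodule.span FL {v' i} : Set (Fin K → FL))) =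
      ⋃ i, (Submodule.span FL {v i} : Set (Fin K → FL)) := by
    ext x
    simp only [Set.mem_iUnion]
    constructor
    · rintro ⟨i, hx⟩
      by_cases hvi : v i = 0
      · refine ⟨j, ?_⟩
        rw [hv'] at hx
        simpa [hvi] using hx
      · refine ⟨i, ?_⟩
        rw [hv'] at hx
        simpa [hvi] using hx
    · rintro ⟨i, hx⟩
      by_cases hvi : v i = 0
      · rw [hvi, Submodule.span_zero_singleton] at hx
        have hx0 : x = 0 := by simpa using hx
        exact ⟨i, by rw [hx0]; exact Submodule.zero_mem _⟩
      · refine ⟨i, ?_⟩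
        rw [hv']
        simpa [hvi] using hx
  have C1' : ∀ H : Submodule Fq (Fin K → FL), Module.finrank Fq H = K * h - 1 →
      Submodule.span Fq ((⋃ i, (Submodule.span FL {v' i} : Set (Fin K → FL)))
        ∩ (H : Set (Fin K → FL))) = H := by
    intro H hH
    rw [hSeq]
    exact C1 H hH
  have hspan : Submodule.span FL (Set.range v') = ⊤ := by
    rw [Submodule.eq_top_iff']
    intro x
    by_cases hx0 : x = 0
    · rw [hx0]
      exact Submodule.zero_mem _
    obtain ⟨H, hxH, -, hHfr⟩ := sbs_exists_inter (K * h - 2)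
      (Submodule.span Fq {x}) ⊤ le_top
      (by rw [finrank_span_singleton hx0, finrank_top, hdimV]; omega)
    rw [finrank_span_singleton hx0] at hHfr
    have hHfr' : Module.finrank Fq H = K * h - 1 := by omega
    have hxH' : x ∈ H := hxH (Submodule.mem_span_singleton_self x)
    have hCH := C1' H hHfr'
    have hxSp : x ∈ Submodule.span Fq ((⋃ i, (Submodule.span FL {v' i} :
        Set (Fin K → FL))) ∩ (H : Set (Fin K → FL))) := by
      rw [hCH]
      exact hxH'
    have hle : Submodule.span Fq ((⋃ i, (Submodule.span FL {v' i} :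
        Set (Fin K → FL))) ∩ (H : Set (Fin K → FL))) ≤
        (Submodule.span FL (Set.range v')).restrictScalars Fq := by
      apply Submodule.span_le.mpr
      rintro y ⟨hy1, -⟩
      obtain ⟨i, hyi⟩ := Set.mem_iUnion.mp hy1
      have hmono : Submodule.span FL {v' i} ≤ Submodule.span FL (Set.range v') :=
        Submodule.span_mono (Set.singleton_subset_iff.mpr ⟨i, rfl⟩)
      exact hmono hyi
    exact hle hxSp
  exact ⟨v', hv'ne, hspan, C1'⟩
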